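/- For every odd integer n ≥ 5, the function f(t) = t/2 + ((n-t)/4)·(1 + cos(π/(n-t))), defined for odd integers t with 1 ≤ t ≤ n-4, attains its maximum at t = 1. -/

import Mathlib

open Real

/-- Key inequality: `x ↦ sin² x / x` is strictly increasing on `(0, π/4]`. -/
lemma key_sin_sq (x y : ℝ) (hy : 0 < y) (hyx : y < x) (hx : x ≤ π / 4) :
    x * Real.sin y ^ 2 < y * Real.sin x ^ 2 := by
  have hπ1 : (3.14 : ℝ) < π := by linarith [Real.pi_gt_d6]
  have hπ2 : π < 3.15 := by linarith [Real.pi_lt_d2]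
  have hx1 : x < 1 := by nlinarith
  have hsy : 0 < Real.sin y := Real.sin_pos_of_pos_of_lt_pi hy (by nlinarith)
  have hsyy : Real.sin y < y := Real.sin_lt hy
  -- `sin (x+y) > sin (2y)`
  have h1 : Real.sin (2 * y) < Real.sin (x + y) :=
    Real.sin_lt_sin_of_lt_of_le_pi_div_two (by nlinarith) (by nlinarith) (by linarith)
  have h2 : Real.sin (2 * y) = 2 * Real.sin y * Real.cos y := Real.sin_two_mul y
  -- `cos y > √2/2 ≥ 0.7`
  have hcy : Real.cos (π / 4) < Real.cos y :=
    Real.cos_lt_cos_of_nonneg_of_le_pi (le_of_lt hy) (by nlinarith) (by linarith)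
  have hs2 : (1.4 : ℝ) < Real.sqrt 2 := by
    have : ((1.4 : ℝ)) ^ 2 < 2 := by norm_num
    nlinarith [Real.sq_sqrt (by norm_num : (2:ℝ) ≥ 0), Real.sqrt_nonneg 2]
  have hcy7 : (0.7 : ℝ) < Real.cos y := by
    rw [Real.cos_pi_div_four] at hcy; linarith
  -- `sin (x - y) > 0.75 * (x - y)`
  have hd : 0 < x - y := by linarith
  have hd1 : x - y < 1 := by linarith
  have h3 : (x - y) - (x - y) ^ 3 / 4 < Real.sin (x - y) :=
    by have := Real.sin_gt_sub_cube hd; linarith [pow_pos hd 3]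
  have hdsq : (x - y) ^ 2 < 1 := by nlinarith
  have h3' : (0.75 : ℝ) * (x - y) < Real.sin (x - y) := by nlinarith [mul_pos hd hd]
  -- identity: sin(x+y) sin(x-y) = sin² x - sin² y
  have hcx := Real.sin_sq_add_cos_sq x
  have hcy' := Real.sin_sq_add_cos_sq y
  have hid : Real.sin (x + y) * Real.sin (x - y) = Real.sin x ^ 2 - Real.sin y ^ 2 := by
    rw [Real.sin_add, Real.sin_sub]
    linear_combination Real.sin x ^ 2 * hcy' - Real.sin y ^ 2 * hcx
  -- combine
  have h4 : (1.4 : ℝ) * Real.sin y < Real.sin (x + y) := by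
    nlinarith [mul_pos hsy (sub_pos.mpr hcy7)]
  have hp1 : (1.4 : ℝ) * Real.sin y * (0.75 * (x - y)) <
      Real.sin (x + y) * Real.sin (x - y) :=
    mul_lt_mul'' h4 h3' (by positivity) (by positivity)
  have hm : (x - y) * Real.sin y * Real.sin y < (x - y) * Real.sin y * y :=
    mul_lt_mul_of_pos_left hsyy (mul_pos hd hsy)
  have step : (x - y) * Real.sin y ^ 2 < y * ((1.4 : ℝ) * Real.sin y * (0.75 * (x - y))) := by
    nlinarith [mul_pos hd hsy]
  have step2 : y * ((1.4 : ℝ) * Real.sin y * (0.75 * (x - y))) ≤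
      y * (Real.sin (x + y) * Real.sin (x - y)) :=
    mul_le_mul_of_nonneg_left hp1.le hy.le
  have hfin' : (x - y) * Real.sin y ^ 2 < y * (Real.sin x ^ 2 - Real.sin y ^ 2) := by
    rw [← hid]; linarith
  have hring : x * Real.sin y ^ 2 - y * Real.sin x ^ 2 =
      (x - y) * Real.sin y ^ 2 - y * (Real.sin x ^ 2 - Real.sin y ^ 2) := by ring
  linarith [hfin', hring]

/-- Monotonicity step: for `4 ≤ a < b`, `b * (1 - cos (π/b)) < a * (1 - cos (π/a))`. -/
lemma key_mono (a b : ℝ) (ha : 4 ≤ a) (hab : a < b) :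
    b * (1 - Real.cos (π / b)) < a * (1 - Real.cos (π / a)) := by
  have hπ : 0 < π := Real.pi_pos
  have ha0 : 0 < a := by linarith
  have hb0 : 0 < b := by linarith
  set x : ℝ := π / (2 * a) with hxdef
  set y : ℝ := π / (2 * b) with hydef
  have hy0 : 0 < y := by positivity
  have hx0 : 0 < x := by positivity
  have hyx : y < x := by
    apply div_lt_div_of_pos_left hπ (by positivity) (by linarith)
  have hx4 : x ≤ π / 4 := by
    rw [hxdef]
    apply div_le_div_of_nonneg_left (le_of_lt hπ) (by norm_num) (by linarith)
  have key := key_sin_sq x y hy0 hyx hx4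
  have hsa : Real.sin x ^ 2 = 1 / 2 - Real.cos (π / a) / 2 := by
    have := Real.sin_sq_eq_half_sub x
    rw [hxdef] at this ⊢
    have h2x : 2 * (π / (2 * a)) = π / a := by field_simp
    rw [h2x] at this
    exact this
  have hsb : Real.sin y ^ 2 = 1 / 2 - Real.cos (π / b) / 2 := by
    have := Real.sin_sq_eq_half_sub y
    rw [hydef] at this ⊢
    have h2y : 2 * (π / (2 * b)) = π / b := by field_simp
    rw [h2y] at this
    exact this
  rw [hsa, hsb] at key
  -- key : x * (1/2 - cos(π/b)/2) < y * (1/2 - cos(π/a)/2)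
  -- x = π/(2a), y = π/(2b); multiply by 2ab/π
  rw [hxdef, hydef] at key
  have h1 : π / (2 * a) * (1 / 2 - Real.cos (π / b) / 2) =
      (π / (4 * a * b)) * (b * (1 - Real.cos (π / b))) := by
    field_simp; ring
  have h2 : π / (2 * b) * (1 / 2 - Real.cos (π / a) / 2) =
      (π / (4 * a * b)) * (a * (1 - Real.cos (π / a))) := by
    field_simp; ring
  rw [h1, h2] at key
  have hc : 0 < π / (4 * a * b) := by positivity
  have := (mul_lt_mul_iff_right₀ hc).mp key
  linarith

/-- For every odd integer `n ≥ 5`, the function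
`f(t) = t/2 + ((n-t)/4)·(1 + cos(π/(n-t)))`, defined for odd integers `t` with
`1 ≤ t ≤ n-4`, attains its maximum at `t = 1`: `f(t) ≤ f(1)` with equality only at `t = 1`. -/
theorem coloured_lovasz_max_at_one (n : ℕ) (hodd : Odd n) (hn : 5 ≤ n)
    (t : ℕ) (ht : Odd t) (ht1 : 1 ≤ t) (htn : t ≤ n - 4) :
    ((t : ℝ) / 2 + (((n : ℝ) - t) / 4) * (1 + Real.cos (π / ((n : ℝ) - t))) ≤
      1 / 2 + (((n : ℝ) - 1) / 4) * (1 + Real.cos (π / ((n : ℝ) - 1)))) ∧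
    (t ≠ 1 →
      (t : ℝ) / 2 + (((n : ℝ) - t) / 4) * (1 + Real.cos (π / ((n : ℝ) - t))) <
        1 / 2 + (((n : ℝ) - 1) / 4) * (1 + Real.cos (π / ((n : ℝ) - 1)))) := by
  have htn' : t + 4 ≤ n := by omega
  by_cases h1 : t = 1
  · subst h1
    norm_num
  · have ht3 : 3 ≤ t := by
      rcases ht with ⟨k, hk⟩; omega
    have strict : (t : ℝ) / 2 + (((n : ℝ) - t) / 4) * (1 + Real.cos (π / ((n : ℝ) - t))) <
        1 / 2 + (((n : ℝ) - 1) / 4) * (1 + Real.cos (π / ((n : ℝ) - 1))) := by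
      set a : ℝ := (n : ℝ) - t with hadef
      set b : ℝ := (n : ℝ) - 1 with hbdef
      have hta : (t : ℝ) + 4 ≤ (n : ℝ) := by exact_mod_cast htn'
      have ht3' : (3 : ℝ) ≤ (t : ℝ) := by exact_mod_cast ht3
      have ha4 : 4 ≤ a := by rw [hadef]; linarith
      have hab : a < b := by rw [hadef, hbdef]; linarith
      have hmono := key_mono a b ha4 hab
      have hta' : (t : ℝ) = (n : ℝ) - a := by rw [hadef]; ring
      rw [hta']
      have h1' : (1 : ℝ) = (n : ℝ) - b := by rw [hbdef]; ring
      nth_rewrite 2 [h1']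
      -- goal: (n-a)/2 + (a/4)(1+cos(π/a)) < (n-b)/2 + (b/4)(1+cos(π/b))
      nlinarith [hmono]
    exact ⟨le_of_lt strict, fun _ => strict⟩
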